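/- Let H be a real Hilbert space, λ ∈ ℝ, and let Φ : H → (−∞,+∞] be proper, λ-convex, and lower semicontinuous. Let (t_n)_{n∈ℕ} ⊆ 𝔦_{−λ} and t_* ∈ 𝔦_{−λ} be such that t_n → t_* as n → ∞. Then for every x ∈ H, [Φ]^{t_n}(x) → [Φ]^{t_*}(x) as n → ∞. -/

import Mathlib

open Filter Topology

/-- `Φ` is `λ`-convex: `Φ(tx + (1−t)y) ≤ tΦ(x) + (1−t)Φ(y) − (λ/2)t(1−t)‖x−y‖²`. -/
def LambdaConvex {H : Type*} [NormedAddCommGroup H] [NormedSpace ℝ H]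
    (l : ℝ) (Φ : H → EReal) : Prop :=
  ∀ x y : H, ∀ t : ℝ, t ∈ Set.Icc (0 : ℝ) 1 →
    Φ (t • x + (1 - t) • y) ≤
      (t : EReal) * Φ x + ((1 - t : ℝ) : EReal) * Φ y
        - (((l / 2) * t * (1 - t) * ‖x - y‖ ^ 2 : ℝ) : EReal)

/-- The Moreau envelope `[Φ]^γ(x) = inf_y ( Φ(y) + ‖y − x‖²/(2γ) )`. -/
noncomputable def moreauEnv {H : Type*} [NormedAddCommGroup H]
    (Φ : H → EReal) (γ : ℝ) (x : H) : EReal :=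
  ⨅ y : H, Φ y + ((‖y - x‖ ^ 2 / (2 * γ) : ℝ) : EReal)

open Classical in
/-- The interval `𝔦_ω`: `(0, 1/ω)` if `ω > 0` and `(0, +∞)` if `ω ≤ 0`. -/
noncomputable def Iomega (ω : ℝ) : Set ℝ :=
  if 0 < ω then Set.Ioo 0 (1 / ω) else Set.Ioi 0

private lemma normCombo' {H : Type*} [NormedAddCommGroup H] [InnerProductSpace ℝ H]
    (u v : H) (t : ℝ) :
    ‖t • u + (1 - t) • v‖ ^ 2
      = t * ‖u‖ ^ 2 + (1 - t) * ‖v‖ ^ 2 - t * (1 - t) * ‖u - v‖ ^ 2 := by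
  rw [norm_add_sq_real, norm_sub_sq_real, norm_smul, norm_smul,
    real_inner_smul_left, real_inner_smul_right, Real.norm_eq_abs, Real.norm_eq_abs,
    mul_pow, mul_pow, sq_abs, sq_abs]
  ring

lemma normCombo {H : Type*} [NormedAddCommGroup H] [InnerProductSpace ℝ H]
    (y z x : H) (t : ℝ) :
    ‖t • y + (1 - t) • z - x‖ ^ 2
      = t * ‖y - x‖ ^ 2 + (1 - t) * ‖z - x‖ ^ 2 - t * (1 - t) * ‖y - z‖ ^ 2 := by
  have h : t • y + (1 - t) • z - x = t • (y - x) + (1 - t) • (z - x) := by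
    rw [smul_sub, smul_sub]; module
  have h2 : y - z = (y - x) - (z - x) := by abel
  rw [h, h2, normCombo']

set_option maxHeartbeats 2000000 in
lemma envBound {H : Type*} [NormedAddCommGroup H] [InnerProductSpace ℝ H]
    (l : ℝ) (Φ : H → EReal) (hbot : ∀ x, Φ x ≠ ⊥) (hconv : LambdaConvex l Φ)
    (hlsc : LowerSemicontinuous Φ) (x y₀ : H) (hy₀ : Φ y₀ ≠ ⊤)
    (s : ℝ) (hs : 0 < s) (hls : 0 < l + 2 * s) :
    ∃ M : ℝ, ∀ y : H, (M : EReal) ≤ Φ y + ((s * ‖y - x‖ ^ 2 : ℝ) : EReal) := by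
  set c : ℝ := (Φ y₀).toReal with hcdef
  have hc : Φ y₀ = (c : EReal) := (EReal.coe_toReal hy₀ (hbot y₀)).symm
  have hlt : ((c - 1 : ℝ) : EReal) < Φ y₀ := by
    rw [hc]; exact_mod_cast sub_one_lt c
  obtain ⟨δ, hδ, hball⟩ := Metric.eventually_nhds_iff.mp (hlsc y₀ _ hlt)
  set K : ℝ := ‖y₀ - x‖ with hKdef
  set B : ℝ := 1 + s * K ^ 2 with hBdef
  set Q : ℝ := 16 * B ^ 2 / ((l + 2 * s) * δ ^ 2) with hQdef
  refine ⟨c - 1 - Q, fun y => ?_⟩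
  by_cases hΦy : Φ y = ⊤
  · rw [hΦy, EReal.top_add_coe]; exact le_top
  have hB1 : (1:ℝ) ≤ B := by linarith [mul_nonneg hs.le (sq_nonneg K)]
  have hQ0 : 0 ≤ Q := by
    rw [hQdef]; positivity
  set r : ℝ := (Φ y).toReal with hrdef
  have hr : Φ y = (r : EReal) := (EReal.coe_toReal hΦy (hbot y)).symm
  set a : ℝ := ‖y - x‖ ^ 2 with hadef
  have ha : 0 ≤ a := sq_nonneg _
  rw [hr, ← EReal.coe_add, EReal.coe_le_coe_iff]
  set d : ℝ := ‖y - y₀‖ with hddef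
  clear_value c K B Q r a d
  by_cases hd : d < δ
  · -- close to y₀
    have h : ((c - 1 : ℝ) : EReal) < Φ y := hball (show dist y y₀ < δ by rw [dist_eq_norm, ← hddef]; exact hd)
    rw [hr, EReal.coe_lt_coe_iff] at h
    linarith [mul_nonneg hs.le ha]
  · push_neg at hd
    have hdpos : 0 < d := lt_of_lt_of_le hδ hd
    set t : ℝ := δ / (2 * d) with htdef
    have htpos : 0 < t := by positivity
    have htd : 2 * t * d = δ := by rw [htdef]; field_simp
    have hth : t ≤ 1/2 := by
      rw [htdef, div_le_iff₀ (by positivity)]; linarith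
    have htmem : t ∈ Set.Icc (0:ℝ) 1 := ⟨htpos.le, by linarith⟩
    set z : H := t • y + (1 - t) • y₀ with hzdef
    clear_value t z
    have hzy₀ : ‖z - y₀‖ = t * d := by
      have h' : z - y₀ = t • (y - y₀) := by rw [hzdef, smul_sub, sub_smul, one_smul]; module
      rw [h', norm_smul, Real.norm_eq_abs, abs_of_pos htpos, hddef]
    have hzball : ((c - 1 : ℝ) : EReal) < Φ z := by
      apply hball
      rw [dist_eq_norm, hzy₀]
      linarith [mul_pos htpos hdpos]
    have hcv := hconv y y₀ t htmem
    rw [← hzdef, hr, hc] at hcv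
    have hcast : ((t : ℝ) : EReal) * ((r : ℝ) : EReal) + ((1 - t : ℝ) : EReal) * ((c:ℝ):EReal)
        - (((l / 2) * t * (1 - t) * ‖y - y₀‖ ^ 2 : ℝ) : EReal)
        = ((t * r + (1 - t) * c - (l / 2) * t * (1 - t) * d ^ 2 : ℝ) : EReal) := by
      rw [← hddef]; norm_cast
    rw [hcast] at hcv
    have hkey : c - 1 < t * r + (1 - t) * c - (l / 2) * t * (1 - t) * d ^ 2 := by
      exact_mod_cast lt_of_lt_of_le hzball hcv
    have hnorm : ‖z - x‖ ^ 2 = t * a + (1 - t) * K ^ 2 - t * (1 - t) * d ^ 2 := by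
      rw [hzdef, normCombo, ← hadef, ← hKdef, ← hddef]
    have hnn : 0 ≤ ‖z - x‖ ^ 2 := sq_nonneg _
    have h2 : t * (1 - t) * d ^ 2 - (1 - t) * K ^ 2 ≤ t * a := by
      rw [hnorm] at hnn; linarith
    have h2s := mul_le_mul_of_nonneg_left h2 hs.le
    have h3 : t * c - 1 - s * ((1 - t) * K ^ 2) + (l / 2 + s) * (t * (1 - t) * d ^ 2)
        ≤ t * (r + s * a) := by linarith [hkey, h2s]
    have h12 : (0:ℝ) ≤ 1/2 - t := by linarith
    have h4 : (l + 2 * s) / 4 * (t * d ^ 2) ≤ (l / 2 + s) * (t * (1 - t) * d ^ 2) := by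
      linarith [mul_nonneg (mul_nonneg (mul_nonneg hls.le htpos.le) h12) (sq_nonneg d)]
    have e1 : (l + 2 * s) / 4 * (t * d ^ 2) = (l + 2 * s) * δ * d / 8 := by
      rw [← htd]; ring
    have h5 : s * ((1 - t) * K ^ 2) ≤ s * K ^ 2 := by
      linarith [mul_nonneg (mul_nonneg hs.le htpos.le) (sq_nonneg K)]
    have hq : (0:ℝ) < (l + 2 * s) * δ * d := by
      exact mul_pos (mul_pos hls hδ) hdpos
    have hQ1 : t * Q = 8 * B ^ 2 / ((l + 2 * s) * δ * d) := by
      rw [htdef, hQdef]; field_simp; ring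
    have h7 : B - (l + 2 * s) * δ * d / 8 ≤ t * Q := by
      rw [hQ1, le_div_iff₀ hq]
      nlinarith [sq_nonneg ((l + 2 * s) * δ * d - 4 * B), sq_nonneg B]
    have hfin : t * (c - 1 - Q) ≤ t * (r + s * a) := by
      linarith [h3, h4, h5, h7, e1, htpos.le]
    exact le_of_mul_le_mul_left hfin htpos

lemma memS (l γ : ℝ) (h : γ ∈ Iomega (-l)) : 0 < γ ∧ max 0 (-(l/2)) < 1/(2*γ) := by
  unfold Iomega at h
  split_ifs at h with hl
  · obtain ⟨h1, h2⟩ := h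
    refine ⟨h1, ?_⟩
    rw [max_lt_iff]
    refine ⟨by positivity, ?_⟩
    rw [lt_div_iff₀ (by positivity)]
    rw [lt_div_iff₀ (by linarith : (0:ℝ) < -l)] at h2
    nlinarith
  · have h1 : 0 < γ := h
    push_neg at hl
    refine ⟨h1, ?_⟩
    rw [max_lt_iff]
    refine ⟨by positivity, ?_⟩
    rw [lt_div_iff₀ (by positivity)]
    nlinarith [mul_nonneg (by linarith : (0:ℝ) ≤ l) h1.le]


/-- Let `Φ : H → (−∞,+∞]` be proper, `λ`-convex, and lower semicontinuous on a
real Hilbert space `H`. If `(t_n) ⊆ 𝔦_{−λ}` and `t_* ∈ 𝔦_{−λ}` with `t_n → t_*`, then for every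
`x ∈ H`, `[Φ]^{t_n}(x) → [Φ]^{t_*}(x)`. -/
theorem moreauEnv_tendsto {H : Type*} [NormedAddCommGroup H]
    [InnerProductSpace ℝ H] [CompleteSpace H] (l : ℝ) (Φ : H → EReal)
    (hbot : ∀ x, Φ x ≠ ⊥) (hproper : ∃ x, Φ x ≠ ⊤)
    (hconv : LambdaConvex l Φ) (hlsc : LowerSemicontinuous Φ)
    (t : ℕ → ℝ) (ht : ∀ n, t n ∈ Iomega (-l)) (tstar : ℝ) (htstar : tstar ∈ Iomega (-l))
    (htend : Tendsto t atTop (𝓝 tstar)) (x : H) :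
    Tendsto (fun n => moreauEnv Φ (t n) x) atTop (𝓝 (moreauEnv Φ tstar x)) := by
  obtain ⟨y₀, hy₀⟩ := hproper
  set S : Set ℝ := Set.Ioi (max 0 (-(l/2))) with hSdef
  have hSopen : IsOpen S := isOpen_Ioi
  have hSmem : ∀ s ∈ S, 0 < s ∧ 0 < l + 2 * s := by
    intro s hs
    rw [hSdef, Set.mem_Ioi, max_lt_iff] at hs
    exact ⟨hs.1, by linarith [hs.2]⟩
  set g : ℝ → EReal := fun s => ⨅ y : H, Φ y + ((s * ‖y - x‖ ^ 2 : ℝ) : EReal) with hgdef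
  have hc : Φ y₀ = (((Φ y₀).toReal : ℝ) : EReal) := (EReal.coe_toReal hy₀ (hbot y₀)).symm
  have hgtop : ∀ s : ℝ, g s ≠ ⊤ := by
    intro s
    have h1 : g s ≤ Φ y₀ + ((s * ‖y₀ - x‖ ^ 2 : ℝ) : EReal) := iInf_le _ y₀
    rw [hc, ← EReal.coe_add] at h1
    exact (lt_of_le_of_lt h1 (EReal.coe_lt_top _)).ne
  have hgbot : ∀ s ∈ S, g s ≠ ⊥ := by
    intro s hs
    obtain ⟨M, hM⟩ := envBound l Φ hbot hconv hlsc x y₀ hy₀ s (hSmem s hs).1 (hSmem s hs).2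
    have h1 : (M : EReal) ≤ g s := le_iInf hM
    intro hb
    rw [hb, le_bot_iff] at h1
    exact EReal.coe_ne_bot M h1
  set G : ℝ → ℝ := fun s => (g s).toReal with hGdef
  have hgG : ∀ s ∈ S, g s = ((G s : ℝ) : EReal) := fun s hs =>
    (EReal.coe_toReal (hgtop s) (hgbot s hs)).symm
  -- concavity
  have hconc : ConcaveOn ℝ S G := by
    refine ⟨convex_Ioi _, ?_⟩
    intro s₁ hs₁ s₂ hs₂ p q hp hq hpq
    simp only [smul_eq_mul]
    have hmem : p * s₁ + q * s₂ ∈ S := by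
      have h' := (convex_Ioi (max 0 (-(l/2)))) hs₁ hs₂ hp hq hpq
      simpa only [smul_eq_mul] using h'
    have key : ((p * G s₁ + q * G s₂ : ℝ) : EReal) ≤ g (p * s₁ + q * s₂) := by
      rw [hgdef]
      refine le_iInf fun y => ?_
      by_cases hy : Φ y = ⊤
      · rw [hy, EReal.top_add_coe]; exact le_top
      · have hyr : Φ y = (((Φ y).toReal : ℝ) : EReal) := (EReal.coe_toReal hy (hbot y)).symm
        set ρ : ℝ := (Φ y).toReal with hρdef
        set a : ℝ := ‖y - x‖ ^ 2 with hadef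
        have e1 : G s₁ ≤ ρ + s₁ * a := by
          have h1 : g s₁ ≤ Φ y + ((s₁ * a : ℝ) : EReal) := iInf_le _ y
          rw [hgG s₁ hs₁, hyr, ← EReal.coe_add, EReal.coe_le_coe_iff] at h1
          exact h1
        have e2 : G s₂ ≤ ρ + s₂ * a := by
          have h1 : g s₂ ≤ Φ y + ((s₂ * a : ℝ) : EReal) := iInf_le _ y
          rw [hgG s₂ hs₂, hyr, ← EReal.coe_add, EReal.coe_le_coe_iff] at h1
          exact h1
        rw [hyr, ← EReal.coe_add, EReal.coe_le_coe_iff]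
        have hρ : p * ρ + q * ρ = ρ := by rw [← add_mul, hpq, one_mul]
        nlinarith [mul_le_mul_of_nonneg_left e1 hp, mul_le_mul_of_nonneg_left e2 hq]
    rw [hgG _ hmem] at key
    exact_mod_cast key
  have hcont : ContinuousOn G S := hconc.continuousOn hSopen
  -- membership
  have hstar := memS l tstar htstar
  have hstarS : 1/(2 * tstar) ∈ S := hstar.2
  have htnS : ∀ n, 1/(2 * t n) ∈ S := fun n => (memS l (t n) (ht n)).2
  -- moreauEnv = g ∘ (1/(2γ))
  have hme : ∀ γ : ℝ, moreauEnv Φ γ x = g (1/(2*γ)) := by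
    intro γ
    rw [hgdef]
    unfold moreauEnv
    exact iInf_congr fun y => by rw [show ‖y - x‖ ^ 2 / (2*γ) = 1/(2*γ) * ‖y - x‖ ^ 2 by ring]
  have h2t : Tendsto (fun n => 1/(2 * t n)) atTop (𝓝 (1/(2 * tstar))) := by
    exact Tendsto.div tendsto_const_nhds (Tendsto.const_mul _ htend)
      (mul_pos two_pos (memS l tstar htstar).1).ne'
  have h3 : Tendsto (fun n => G (1/(2 * t n))) atTop (𝓝 (G (1/(2 * tstar)))) :=
    ((hcont.continuousAt (hSopen.mem_nhds hstarS)).tendsto).comp h2t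
  have heq : (fun n => moreauEnv Φ (t n) x) = fun n => ((G (1/(2 * t n)) : ℝ) : EReal) :=
    funext fun n => by rw [hme, hgG _ (htnS n)]
  rw [heq, hme tstar, hgG _ hstarS]
  exact (continuous_coe_real_ereal.tendsto _).comp h3
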